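/- arXiv:2210.02565 — 2 statements merged into one kernel-verified Lean document; each statement's English description precedes it below -/
import Mathlib

section
/- For every k ∈ ℂ and every r′ ∈ ℝ³, the function u(r) = exp(i k ‖r − r′‖)/(4π ‖r − r′‖) satisfies the Helmholtz equation Δu(r) + k² u(r) = 0 at every point r ∈ ℝ³ with r ≠ r′, where Δ denotes the Euclidean Laplacian (the sum of the second partial derivatives in the three coordinates). -/
/-- Partial derivative in the `i`-th coordinate of a complex-valued function on `ℝ³`. -/
noncomputable def pderiv3 (i : Fin 3) (f : EuclideanSpace ℝ (Fin 3) → ℂ)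
    (r : EuclideanSpace ℝ (Fin 3)) : ℂ :=
  deriv (fun t : ℝ => f (WithLp.toLp 2 (Function.update r i t))) (r i)

/-- The Euclidean Laplacian of a complex-valued function on `ℝ³`: the sum of the second
partial derivatives in the three coordinates. -/
noncomputable def laplacian3 (f : EuclideanSpace ℝ (Fin 3) → ℂ)
    (r : EuclideanSpace ℝ (Fin 3)) : ℂ :=
  ∑ i : Fin 3, pderiv3 i (pderiv3 i f) r

/-- The free-space Helmholtz Green function with wavenumber `k`:
`G_k(r, r′) = exp(i k ‖r − r′‖)/(4π ‖r − r′‖)`. -/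
noncomputable def green (k : ℂ) (r r' : EuclideanSpace ℝ (Fin 3)) : ℂ :=
  Complex.exp (Complex.I * k * (‖r - r'‖ : ℂ)) / (4 * (Real.pi : ℂ) * (‖r - r'‖ : ℂ))

open Complex Real Filter

noncomputable section
namespace Helm

noncomputable def rho (c a t : ℝ) : ℝ := Real.sqrt (c + (t - a)^2)

lemma rho_sq {c a t : ℝ} (hc : 0 ≤ c) : (rho c a t)^2 = c + (t - a)^2 := by
  have : 0 ≤ c + (t-a)^2 := by positivity
  simp [rho, Real.sq_sqrt this]

lemma rho_pos {c a t : ℝ} (hc : 0 ≤ c) (h : c + (t-a)^2 ≠ 0) : 0 < rho c a t := by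
  have h1 : 0 < c + (t-a)^2 := lt_of_le_of_ne (by positivity) (Ne.symm h)
  exact Real.sqrt_pos.mpr h1

lemma hasDerivAt_rho {c a t : ℝ} (h : c + (t-a)^2 ≠ 0) :
    HasDerivAt (rho c a) ((t - a) / rho c a t) t := by
  have hin : HasDerivAt (fun t : ℝ => c + (t - a)^2) (2*(t-a)) t := by
    have := ((hasDerivAt_id t).sub_const a).pow 2
    simpa [mul_comm] using this.const_add c
  have := (Real.hasDerivAt_sqrt h).comp t hin
  refine this.congr_deriv ?_
  symm
  unfold rho
  field_simp

noncomputable def A (k : ℂ) (s : ℝ) : ℂ :=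
  Complex.exp (I*k*s) * (I*k*s - 1) / (4*(Real.pi:ℂ)*(s:ℂ)^3)

noncomputable def A1 (k : ℂ) (s : ℝ) : ℂ :=
  Complex.exp (I*k*s) * (-(k^2*(s:ℂ)^2) - 3*(I*k*s - 1)) / (4*(Real.pi:ℂ)*(s:ℂ)^4)

lemma hasDerivAt_explin (k : ℂ) (s : ℝ) :
    HasDerivAt (fun s : ℝ => Complex.exp (I*k*s)) (I*k*Complex.exp (I*k*s)) s := by
  have h : HasDerivAt (fun z : ℂ => Complex.exp (I*k*z)) (I*k*Complex.exp (I*k*(s:ℂ))) (s:ℂ) := by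
    have := (Complex.hasDerivAt_exp (I*k*(s:ℂ))).comp (s:ℂ) ((hasDerivAt_id (s:ℂ)).const_mul (I*k))
    simpa [Function.comp_def, mul_comm] using this
  exact h.comp_ofReal

lemma hasDerivAt_A {k : ℂ} {s : ℝ} (hs : s ≠ 0) : HasDerivAt (A k) (A1 k s) s := by
  have hN : HasDerivAt (fun s : ℝ => Complex.exp (I*k*s) * (I*k*s - 1))
      (I*k*Complex.exp (I*k*s) * (I*k*s - 1) + Complex.exp (I*k*s) * (I*k)) s := by
    have hid : HasDerivAt (fun y : ℝ => (y:ℂ)) 1 s := by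
      simpa using (hasDerivAt_id s).ofReal_comp
    have h2 : HasDerivAt (fun s : ℝ => (I*k*(s:ℂ) - 1)) (I*k) s := by
      simpa using (hid.const_mul (I*k)).sub_const 1
    exact (hasDerivAt_explin k s).mul h2
  have hD : HasDerivAt (fun s : ℝ => 4*(Real.pi:ℂ)*(s:ℂ)^3) (4*(Real.pi:ℂ)*(3*(s:ℂ)^2)) s := by
    have h := ((hasDerivAt_pow 3 (s:ℂ)).comp_ofReal).const_mul (4*(Real.pi:ℂ))
    norm_num at h
    convert h using 1
  have hDne : (4*(Real.pi:ℂ)*(s:ℂ)^3) ≠ 0 := by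
    have hsC : (s:ℂ) ≠ 0 := Complex.ofReal_ne_zero.mpr hs
    have hpi : (Real.pi:ℂ) ≠ 0 := Complex.ofReal_ne_zero.mpr Real.pi_ne_zero
    exact mul_ne_zero (mul_ne_zero (by norm_num) hpi) (pow_ne_zero 3 hsC)
  have := hN.div hD hDne
  refine this.congr_deriv ?_
  symm
  unfold A1
  have hsC : (s:ℂ) ≠ 0 := Complex.ofReal_ne_zero.mpr hs
  have hpi : (Real.pi:ℂ) ≠ 0 := Complex.ofReal_ne_zero.mpr Real.pi_ne_zero
  field_simp
  ring_nf
  simp [Complex.I_sq]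
  ring_nf

noncomputable def g (k : ℂ) (s : ℝ) : ℂ :=
  Complex.exp (I*k*s) / (4*(Real.pi:ℂ)*(s:ℂ))

lemma hasDerivAt_g {k : ℂ} {s : ℝ} (hs : s ≠ 0) :
    HasDerivAt (g k) ((s:ℂ) * A k s) s := by
  have hD : HasDerivAt (fun s : ℝ => 4*(Real.pi:ℂ)*(s:ℂ)) (4*(Real.pi:ℂ)) s := by
    have hid : HasDerivAt (fun y : ℝ => (y:ℂ)) 1 s := by
      simpa using (hasDerivAt_id s).ofReal_comp
    simpa using hid.const_mul (4*(Real.pi:ℂ))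
  have hsC : (s:ℂ) ≠ 0 := Complex.ofReal_ne_zero.mpr hs
  have hpi : (Real.pi:ℂ) ≠ 0 := Complex.ofReal_ne_zero.mpr Real.pi_ne_zero
  have hDne : (4*(Real.pi:ℂ)*(s:ℂ)) ≠ 0 :=
    mul_ne_zero (mul_ne_zero (by norm_num) hpi) hsC
  have := (hasDerivAt_explin k s).div hD hDne
  refine this.congr_deriv ?_
  symm
  unfold A
  field_simp

lemma hasDerivAt_h {k : ℂ} {c a t : ℝ} (hc : 0 ≤ c) (h0 : c + (t-a)^2 ≠ 0) :
    HasDerivAt (fun t => g k (rho c a t)) (((t-a:ℝ):ℂ) * A k (rho c a t)) t := by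
  have hrpos := rho_pos hc h0
  have h1 := hasDerivAt_g (k := k) hrpos.ne'
  have h2 := hasDerivAt_rho h0
  have := h1.scomp t h2
  refine this.congr_deriv ?_
  symm
  rw [Complex.real_smul]
  have : ((rho c a t : ℝ):ℂ) ≠ 0 := Complex.ofReal_ne_zero.mpr hrpos.ne'
  push_cast
  field_simp

lemma hasDerivAt_h1 {k : ℂ} {c a t : ℝ} (hc : 0 ≤ c) (h0 : c + (t-a)^2 ≠ 0) :
    HasDerivAt (fun t => ((t-a:ℝ):ℂ) * A k (rho c a t))
      (A k (rho c a t) + ((t-a:ℝ):ℂ)^2 * A1 k (rho c a t) / ((rho c a t : ℝ):ℂ)) t := by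
  have hrpos := rho_pos hc h0
  have hf : HasDerivAt (fun t : ℝ => ((t-a:ℝ):ℂ)) 1 t := by
    simpa using ((hasDerivAt_id t).sub_const a).ofReal_comp
  have hg2 := (hasDerivAt_A (k := k) hrpos.ne').scomp t (hasDerivAt_rho h0)
  have := hf.mul hg2
  refine this.congr_deriv ?_
  symm
  rw [Complex.real_smul]
  have hne : ((rho c a t : ℝ):ℂ) ≠ 0 := Complex.ofReal_ne_zero.mpr hrpos.ne'
  push_cast
  field_simp
  rw [Function.comp_apply]
  ring

end Helm

end

open Complex Real Filter Helm


/-- For every `k ∈ ℂ` and every `r′ ∈ ℝ³`, the function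
`u(r) = exp(i k ‖r − r′‖)/(4π ‖r − r′‖)` satisfies the Helmholtz equation
`Δu(r) + k² u(r) = 0` at every point `r ∈ ℝ³` with `r ≠ r′`. -/
theorem stmt_4 (k : ℂ) (r' : EuclideanSpace ℝ (Fin 3)) :
    ∀ r : EuclideanSpace ℝ (Fin 3), r ≠ r' →
      laplacian3 (fun x => green k x r') r + k ^ 2 * green k r r' = 0 := by
  intro r hr
  set R : ℝ := ‖r - r'‖ with hRdef
  have hRpos : 0 < R := by
    rw [hRdef, norm_pos_iff]
    exact sub_ne_zero.mpr hr
  have happly : ∀ (x y : EuclideanSpace ℝ (Fin 3)) (j : Fin 3), (x - y) j = x j - y j := by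
    intro x y j; rfl
  have hRsq : ∑ j, (r j - r' j)^2 = R^2 := by
    rw [hRdef, EuclideanSpace.norm_eq]
    rw [Real.sq_sqrt (by positivity)]
    apply Finset.sum_congr rfl
    intro j _
    rw [happly, Real.norm_eq_abs, _root_.sq_abs]
  have key : ∀ i : Fin 3, pderiv3 i (pderiv3 i (fun x => green k x r')) r
      = A k R + ((r i - r' i : ℝ):ℂ)^2 * A1 k R / (R:ℂ) := by
    intro i
    set a : ℝ := r' i with ha
    set c : ℝ := ∑ j ∈ Finset.univ.erase i, (r j - r' j)^2 with hcdef
    have hc : 0 ≤ c := Finset.sum_nonneg (fun j _ => sq_nonneg _)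
    have hsum : c + (r i - a)^2 = R^2 := by
      rw [← hRsq, hcdef, ha, Finset.sum_erase_add _ _ (Finset.mem_univ i)]
    have hnorm : ∀ t : ℝ, ‖(WithLp.toLp 2 (Function.update r i t)) - r'‖
        = rho c a t := by
      intro t
      rw [EuclideanSpace.norm_eq, rho]
      congr 1
      rw [← Finset.sum_erase_add _ _ (Finset.mem_univ i)]
      congr 1
      · rw [hcdef]
        apply Finset.sum_congr rfl
        intro j hj
        rw [happly, Real.norm_eq_abs, _root_.sq_abs]
        congr 1
        simp [Function.update_of_ne (Finset.ne_of_mem_erase hj)]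
      · rw [happly, Real.norm_eq_abs, _root_.sq_abs, ha]
        congr 1
        simp
    have hgreen : ∀ t : ℝ, green k (WithLp.toLp 2 (Function.update r i t)) r' = g k (rho c a t) := by
      intro t
      rw [green, g, hnorm t]
    have hrhoR : rho c a (r i) = R := by
      rw [rho, hsum, Real.sqrt_sq hRpos.le]
    have hstep : pderiv3 i (pderiv3 i (fun x => green k x r')) r
        = deriv (deriv (fun t => g k (rho c a t))) (r i) := by
      unfold pderiv3
      congr 1
      funext t
      rw [WithLp.ofLp_toLp, Function.update_self]
      congr 1
      funext s
      rw [Function.update_idem]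
      exact hgreen s
    have hpos0 : 0 < c + (r i - a)^2 := by rw [hsum]; positivity
    have hcont : ContinuousAt (fun t : ℝ => c + (t - a)^2) (r i) := by fun_prop
    have hev : ∀ᶠ t in nhds (r i), 0 < c + (t - a)^2 :=
      hcont.eventually_mem (Ioi_mem_nhds hpos0) |>.mono (fun t ht => ht)
    have hev1 : deriv (fun t => g k (rho c a t))
        =ᶠ[nhds (r i)] (fun t => ((t-a:ℝ):ℂ) * A k (rho c a t)) :=
      hev.mono (fun t ht => (hasDerivAt_h hc ht.ne').deriv)
    rw [hstep, hev1.deriv_eq, (hasDerivAt_h1 hc hpos0.ne').deriv, hrhoR]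
  have hsumC : ∑ i : Fin 3, ((r i - r' i : ℝ):ℂ)^2 = ((R:ℝ):ℂ)^2 := by
    exact_mod_cast hRsq
  rw [laplacian3]
  simp only [key]
  rw [Finset.sum_add_distrib, Finset.sum_const, ← Finset.sum_div, ← Finset.sum_mul, hsumC]
  have hRC : ((R:ℝ):ℂ) ≠ 0 := Complex.ofReal_ne_zero.mpr hRpos.ne'
  have hpi : (Real.pi:ℂ) ≠ 0 := Complex.ofReal_ne_zero.mpr Real.pi_ne_zero
  rw [A, A1, green, ← hRdef]
  simp only [Finset.card_univ, Fintype.card_fin, nsmul_eq_mul]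
  field_simp
  have e1 : ((R:ℂ))^8 * ((R:ℂ)⁻¹)^8 = 1 := by
    rw [← mul_pow, mul_inv_cancel₀ hRC, one_pow]
  have e2 : ((Real.pi:ℂ))^2 * ((Real.pi:ℂ)⁻¹)^2 = 1 := by
    rw [← mul_pow, mul_inv_cancel₀ hpi, one_pow]
  ring
end

section
/- For all k₁, k₂ ∈ ℂ and every fixed r′ ∈ ℝ³, the vector field r ↦ ∇_r[G_{k₂}(r, r′) − G_{k₁}(r, r′)] + ((k₂² − k₁²)/(8π)) · (r − r′)/‖r − r′‖ tends to the zero vector as r → r′ (through points r ≠ r′); that is, ∇_r[G_{k₂} − G_{k₁}](r, r′) = −((k₂² − k₁²)/(8π)) (r − r′)/‖r − r′‖ + o(1) as ‖r − r′‖ → 0. -/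
/-- The gradient of a complex-valued function on `ℝ³`, computed componentwise. -/
noncomputable def gradC (f : EuclideanSpace ℝ (Fin 3) → ℂ)
    (r : EuclideanSpace ℝ (Fin 3)) : EuclideanSpace ℂ (Fin 3) :=
  WithLp.toLp 2 (fun i => pderiv3 i f r)

/-- The unit vector `(r − r′)/‖r − r′‖`, regarded as a complex vector. -/
noncomputable def unitVec (r r' : EuclideanSpace ℝ (Fin 3)) : EuclideanSpace ℂ (Fin 3) :=
  WithLp.toLp 2 (fun i => (((r - r') i / ‖r - r'‖ : ℝ) : ℂ))

open Complex Filter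

lemma limA : Tendsto (fun z : ℂ => (z * Complex.exp z - Complex.exp z + 1)/z^2)
    (nhdsWithin 0 {0}ᶜ) (nhds (1/2)) := by
  have key : ∀ z : ℂ, z ≠ 0 → ‖z‖ ≤ 1 →
      ‖(z * Complex.exp z - Complex.exp z + 1)/z^2 - 1/2‖ ≤ ‖z‖ := by
    intro z hz h1
    set R := Complex.exp z - (1 + z + z^2/2) with hR
    have hsum : (∑ m ∈ Finset.range 3, z ^ m / m.factorial) = 1 + z + z^2/2 := by
      simp [Finset.sum_range_succ, Nat.factorial]
    have hb := Complex.exp_bound h1 (n := 3) (by norm_num)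
    rw [hsum] at hb
    have hRb : ‖R‖ ≤ ‖z‖^3 * (2/9) := by
      calc ‖R‖ ≤ _ := hb
        _ = ‖z‖ ^ 3 * (2/9) := by push_cast [Nat.factorial]; norm_num
    have hid : (z * Complex.exp z - Complex.exp z + 1)/z^2 - 1/2
        = z/2 + (z-1)*R/z^2 := by
      rw [hR]
      field_simp
      ring
    rw [hid]
    have h2 : ‖z - 1‖ ≤ 2 := by
      calc ‖z - 1‖ ≤ ‖z‖ + ‖(1:ℂ)‖ := norm_sub_le _ _
        _ ≤ 2 := by simp only [norm_one]; linarith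
    have hz2 : ‖z^2‖ = ‖z‖^2 := by simp [norm_pow]
    have hzn : (0:ℝ) < ‖z‖ := norm_pos_iff.mpr hz
    have e : 2 * (‖z‖^3 * (2/9)) / ‖z‖^2 = (4/9) * ‖z‖ := by
      rw [div_eq_iff (by positivity : (0:ℝ) < ‖z‖^2).ne']
      ring
    calc ‖z/2 + (z-1)*R/z^2‖ ≤ ‖z/2‖ + ‖(z-1)*R/z^2‖ := norm_add_le _ _
      _ = ‖z‖/2 + ‖z-1‖ * ‖R‖ / ‖z‖^2 := by simp [norm_div, norm_mul, hz2]
      _ ≤ ‖z‖/2 + 2 * (‖z‖^3 * (2/9)) / ‖z‖^2 := by gcongr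
      _ = ‖z‖/2 + (4/9)*‖z‖ := by rw [e]
      _ ≤ ‖z‖ := by linarith
  have h1ev : ∀ᶠ z : ℂ in nhdsWithin 0 {0}ᶜ, ‖z‖ ≤ 1 := by
    have := Metric.closedBall_mem_nhds (0:ℂ) one_pos
    refine eventually_nhdsWithin_of_eventually_nhds ?_
    filter_upwards [this] with z hz
    simpa [Metric.mem_closedBall, dist_zero_right] using hz
  have hsq : Tendsto (fun z : ℂ => (z * Complex.exp z - Complex.exp z + 1)/z^2 - 1/2)
      (nhdsWithin 0 {0}ᶜ) (nhds 0) := by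
    refine squeeze_zero_norm' (a := fun z : ℂ => ‖z‖) ?_ ?_
    · filter_upwards [self_mem_nhdsWithin, h1ev] with z hz h1z
      exact key z hz h1z
    · have : Tendsto (fun z : ℂ => ‖z‖) (nhds 0) (nhds 0) := by
        simpa using (continuous_norm.tendsto (0:ℂ))
      exact this.mono_left nhdsWithin_le_nhds
  have := hsq.add_const (1/2 : ℂ)
  simpa using this

lemma limB (k : ℂ) : Tendsto
    (fun ρ : ℝ => (Complex.exp (Complex.I*k*ρ)*(Complex.I*k*ρ-1)+1)/(ρ:ℂ)^2)
    (nhdsWithin 0 (Set.Ioi 0)) (nhds (-k^2/2)) := by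
  rcases eq_or_ne k 0 with rfl | hk
  · have : (fun ρ : ℝ => (Complex.exp (Complex.I*0*ρ)*(Complex.I*0*ρ-1)+1)/(ρ:ℂ)^2)
        = fun _ => (0:ℂ) := by
      funext ρ; simp
    rw [this]
    simpa using (tendsto_const_nhds : Tendsto (fun _ : ℝ => (0:ℂ)) _ (nhds 0))
  · have hm : Tendsto (fun ρ : ℝ => Complex.I*k*ρ) (nhdsWithin 0 (Set.Ioi 0))
        (nhdsWithin 0 {0}ᶜ) := by
      rw [tendsto_nhdsWithin_iff]
      constructor
      · have : Continuous (fun ρ : ℝ => Complex.I*k*(ρ:ℂ)) :=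
          continuous_const.mul Complex.continuous_ofReal
        simpa using (this.tendsto 0).mono_left nhdsWithin_le_nhds
      · filter_upwards [self_mem_nhdsWithin] with ρ (hρ : 0 < ρ)
        simp only [Set.mem_compl_iff, Set.mem_singleton_iff]
        intro h
        rcases mul_eq_zero.mp h with h' | h'
        · exact hk (by simpa [Complex.I_ne_zero] using mul_eq_zero.mp h')
        · exact hρ.ne' (by exact_mod_cast h')
    have hcomp := (limA.comp hm).const_mul (-k^2)
    have heq : (fun ρ : ℝ => -k^2 * (((Complex.I*k*ρ) * Complex.exp (Complex.I*k*ρ)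
          - Complex.exp (Complex.I*k*ρ) + 1)/(Complex.I*k*ρ)^2))
        =ᶠ[nhdsWithin 0 (Set.Ioi 0)]
        (fun ρ : ℝ => (Complex.exp (Complex.I*k*ρ)*(Complex.I*k*ρ-1)+1)/(ρ:ℂ)^2) := by
      filter_upwards [self_mem_nhdsWithin] with ρ (hρ : 0 < ρ)
      have hρ' : (ρ:ℂ) ≠ 0 := by exact_mod_cast hρ.ne'
      have hsq : (Complex.I*k*ρ)^2 = -(k^2*ρ^2) := by
        rw [mul_pow, mul_pow, Complex.I_sq]; ring
      rw [hsq]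
      field_simp
    have := hcomp.congr' heq
    convert this using 2
    ring

/-- `Function.update` as a map into `EuclideanSpace`. -/
noncomputable def upd (r : EuclideanSpace ℝ (Fin 3)) (i : Fin 3) (t : ℝ) :
    EuclideanSpace ℝ (Fin 3) := WithLp.toLp 2 (Function.update r i t)

lemma hasDerivAt_phi (k : ℂ) {x : ℝ} (hx : x ≠ 0) :
    HasDerivAt (fun ρ : ℝ => Complex.exp (Complex.I*k*(ρ:ℂ))/(4*(Real.pi:ℂ)*(ρ:ℂ)))
      (Complex.exp (Complex.I*k*(x:ℂ))*(Complex.I*k*(x:ℂ)-1)/(4*(Real.pi:ℂ)*(x:ℂ)^2)) x := by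
  have hπ : (Real.pi:ℂ) ≠ 0 := by exact_mod_cast Real.pi_ne_zero
  have hx' : (x:ℂ) ≠ 0 := by exact_mod_cast hx
  have hC : HasDerivAt (fun w : ℂ => Complex.exp (Complex.I*k*w)/(4*(Real.pi:ℂ)*w))
      (Complex.exp (Complex.I*k*(x:ℂ))*(Complex.I*k*(x:ℂ)-1)/(4*(Real.pi:ℂ)*(x:ℂ)^2)) (x:ℂ) := by
    have h1 : HasDerivAt (fun w : ℂ => Complex.I*k*w) (Complex.I*k) (x:ℂ) := by
      simpa using (hasDerivAt_id ((x:ℝ):ℂ)).const_mul (Complex.I*k)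
    have h2 : HasDerivAt (fun w : ℂ => Complex.exp (Complex.I*k*w))
        (Complex.exp (Complex.I*k*(x:ℂ)) * (Complex.I*k)) (x:ℂ) := h1.cexp
    have h3 : HasDerivAt (fun w : ℂ => 4*(Real.pi:ℂ)*w) (4*(Real.pi:ℂ)) (x:ℂ) := by
      simpa using (hasDerivAt_id ((x:ℝ):ℂ)).const_mul (4*(Real.pi:ℂ))
    have hden : 4*(Real.pi:ℂ)*(x:ℂ) ≠ 0 := by simp [hπ, hx']
    have hdiv := h2.div h3 hden
    exact hdiv.congr_deriv (by
      rw [div_eq_div_iff (pow_ne_zero 2 hden) (by simp [hπ, hx'])]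
      ring)
  exact hC.comp_ofReal

lemma hasDerivAt_nu (r r' : EuclideanSpace ℝ (Fin 3)) (i : Fin 3) (h : r ≠ r') :
    HasDerivAt (fun t : ℝ => ‖upd r i t - r'‖)
      ((r i - r' i)/‖r - r'‖) (r i) := by
  set c := ∑ j ∈ Finset.univ.erase i, (r j - r' j)^2 with hc
  have hnorm : ∀ t : ℝ, ‖upd r i t - r'‖ = Real.sqrt ((t - r' i)^2 + c) := by
    intro t
    rw [EuclideanSpace.norm_eq]
    congr 1
    rw [← Finset.add_sum_erase _ _ (Finset.mem_univ i)]
    congr 1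
    · simp [upd, Real.norm_eq_abs, _root_.sq_abs]
    · refine Finset.sum_congr rfl (fun j hj => ?_)
      have hji : j ≠ i := Finset.ne_of_mem_erase hj
      simp [upd, Real.norm_eq_abs, _root_.sq_abs, Function.update_of_ne hji]
  have hpos : (0:ℝ) < ‖r - r'‖ := norm_pos_iff.mpr (sub_ne_zero.mpr h)
  have hval : Real.sqrt ((r i - r' i)^2 + c) = ‖r - r'‖ := by
    rw [← hnorm (r i)]
    simp [upd]
  have hq : (r i - r' i)^2 + c = ‖r - r'‖^2 := by
    have hnn : (0:ℝ) ≤ (r i - r' i)^2 + c := by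
      have : (0:ℝ) ≤ c := Finset.sum_nonneg (fun j _ => sq_nonneg _)
      positivity
    rw [← hval, Real.sq_sqrt hnn]
  have hinner : HasDerivAt (fun t : ℝ => (t - r' i)^2 + c) (2*(r i - r' i)) (r i) := by
    have := (((hasDerivAt_id (r i)).sub_const (r' i)).pow 2).add_const c
    simpa [mul_comm] using this
  have hq0 : (r i - r' i)^2 + c ≠ 0 := by rw [hq]; positivity
  have hsqrt : HasDerivAt (Real.sqrt ∘ fun t : ℝ => (t - r' i)^2 + c)
      ((1/(2*Real.sqrt ((r i - r' i)^2 + c))) * (2*(r i - r' i))) (r i) :=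
    HasDerivAt.comp_of_eq (r i) (Real.hasDerivAt_sqrt hq0) hinner rfl
  have : (fun t : ℝ => ‖upd r i t - r'‖)
      = (Real.sqrt ∘ fun t : ℝ => (t - r' i)^2 + c) := funext hnorm
  rw [this]
  convert hsqrt using 1
  rw [hval]
  field_simp

lemma hasDerivAt_green (k : ℂ) (r r' : EuclideanSpace ℝ (Fin 3)) (h : r ≠ r') (i : Fin 3) :
    HasDerivAt (fun t : ℝ => green k (upd r i t) r')
      (Complex.exp (Complex.I*k*(‖r-r'‖:ℂ))*(Complex.I*k*(‖r-r'‖:ℂ)-1)/(4*(Real.pi:ℂ)*(‖r-r'‖:ℝ)^2)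
        * (((r i - r' i)/‖r - r'‖ : ℝ) : ℂ)) (r i) := by
  have hpos : (0:ℝ) < ‖r - r'‖ := norm_pos_iff.mpr (sub_ne_zero.mpr h)
  have hν := hasDerivAt_nu r r' i h
  have hφ : HasDerivAt (fun ρ : ℝ => Complex.exp (Complex.I*k*(ρ:ℂ))/(4*(Real.pi:ℂ)*(ρ:ℂ)))
      (Complex.exp (Complex.I*k*(‖r-r'‖:ℂ))*(Complex.I*k*(‖r-r'‖:ℂ)-1)/(4*(Real.pi:ℂ)*(‖r-r'‖:ℝ)^2))
      (‖r - r'‖) := hasDerivAt_phi k hpos.ne'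
  have hcomp : HasDerivAt ((fun ρ : ℝ => Complex.exp (Complex.I*k*(ρ:ℂ))/(4*(Real.pi:ℂ)*(ρ:ℂ)))
      ∘ fun t : ℝ => ‖upd r i t - r'‖)
      (((r i - r' i)/‖r - r'‖) • (Complex.exp (Complex.I*k*(‖r-r'‖:ℂ))*(Complex.I*k*(‖r-r'‖:ℂ)-1)/(4*(Real.pi:ℂ)*(‖r-r'‖:ℝ)^2)))
      (r i) := HasDerivAt.scomp_of_eq (r i) hφ hν (by simp [upd])
  have hfun : ((fun ρ : ℝ => Complex.exp (Complex.I*k*(ρ:ℂ))/(4*(Real.pi:ℂ)*(ρ:ℂ)))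
      ∘ fun t : ℝ => ‖upd r i t - r'‖)
      = fun t : ℝ => green k (upd r i t) r' := rfl
  rw [hfun] at hcomp
  convert hcomp using 1
  rw [Complex.real_smul]
  push_cast
  ring

lemma norm_unitVec (r r' : EuclideanSpace ℝ (Fin 3)) (h : r ≠ r') : ‖unitVec r r'‖ = 1 := by
  have hpos : (0:ℝ) < ‖r - r'‖ := norm_pos_iff.mpr (sub_ne_zero.mpr h)
  have hsum : ∑ i, ((r - r') i)^2 = ‖r - r'‖^2 := by
    rw [EuclideanSpace.norm_eq]
    rw [Real.sq_sqrt (Finset.sum_nonneg fun i _ => by positivity)]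
    simp [Real.norm_eq_abs, _root_.sq_abs]
  rw [EuclideanSpace.norm_eq]
  have hs : ∑ i, ‖unitVec r r' i‖^2 = 1 := by
    simp only [unitVec, Complex.norm_real, Real.norm_eq_abs, _root_.sq_abs, div_pow]
    rw [← Finset.sum_div, hsum]
    field_simp
  rw [hs, Real.sqrt_one]

noncomputable def Sfun (k₁ k₂ : ℂ) (r' : EuclideanSpace ℝ (Fin 3))
    (r : EuclideanSpace ℝ (Fin 3)) : ℂ :=
  ((Complex.exp (Complex.I*k₂*(‖r-r'‖:ℂ))*(Complex.I*k₂*(‖r-r'‖:ℂ)-1)+1)/(‖r-r'‖:ℂ)^2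
     - (Complex.exp (Complex.I*k₁*(‖r-r'‖:ℂ))*(Complex.I*k₁*(‖r-r'‖:ℂ)-1)+1)/(‖r-r'‖:ℂ)^2)
      /(4*(Real.pi:ℂ)) + (k₂^2 - k₁^2)/(8*(Real.pi:ℂ))

/-- For all `k₁, k₂ ∈ ℂ` and every fixed `r′ ∈ ℝ³`, the vector field
`r ↦ ∇_r[G_{k₂}(r, r′) − G_{k₁}(r, r′)] + ((k₂² − k₁²)/(8π)) (r − r′)/‖r − r′‖`
tends to the zero vector as `r → r′` (through points `r ≠ r′`); that is,
`∇_r[G_{k₂} − G_{k₁}](r, r′) = −((k₂² − k₁²)/(8π)) (r − r′)/‖r − r′‖ + o(1)`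
as `‖r − r′‖ → 0`. -/
theorem stmt_6 (k₁ k₂ : ℂ) (r' : EuclideanSpace ℝ (Fin 3)) :
    Filter.Tendsto
      (fun r : EuclideanSpace ℝ (Fin 3) =>
        gradC (fun x => green k₂ x r' - green k₁ x r') r +
          ((k₂ ^ 2 - k₁ ^ 2) / (8 * (Real.pi : ℂ))) • unitVec r r')
      (nhdsWithin r' {r'}ᶜ) (nhds 0) := by
  have hπ : (Real.pi:ℂ) ≠ 0 := by exact_mod_cast Real.pi_ne_zero
  have hρ : Filter.Tendsto (fun r : EuclideanSpace ℝ (Fin 3) => ‖r - r'‖)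
      (nhdsWithin r' {r'}ᶜ) (nhdsWithin 0 (Set.Ioi 0)) := by
    rw [tendsto_nhdsWithin_iff]
    constructor
    · have hcont : Continuous (fun r : EuclideanSpace ℝ (Fin 3) => ‖r - r'‖) := by
        fun_prop
      have : Filter.Tendsto (fun r : EuclideanSpace ℝ (Fin 3) => ‖r - r'‖)
          (nhds r') (nhds 0) := by simpa using hcont.tendsto r'
      exact this.mono_left nhdsWithin_le_nhds
    · filter_upwards [self_mem_nhdsWithin] with r hr
      exact norm_pos_iff.mpr (sub_ne_zero.mpr hr)
  have hStend : Filter.Tendsto (Sfun k₁ k₂ r') (nhdsWithin r' {r'}ᶜ) (nhds 0) := by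
    have h2 := ((limB k₂).comp hρ).sub ((limB k₁).comp hρ)
    have h3 := (h2.div_const (4*(Real.pi:ℂ))).add_const ((k₂^2 - k₁^2)/(8*(Real.pi:ℂ)))
    have hval : (-k₂^2/2 - -k₁^2/2)/(4*(Real.pi:ℂ)) + (k₂^2 - k₁^2)/(8*(Real.pi:ℂ)) = 0 := by
      field_simp
      ring
    rw [hval] at h3
    exact h3.congr (fun r => rfl)
  have hev : ∀ᶠ r in nhdsWithin r' {r'}ᶜ,
      (gradC (fun x => green k₂ x r' - green k₁ x r') r
          + ((k₂ ^ 2 - k₁ ^ 2) / (8 * (Real.pi : ℂ))) • unitVec r r')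
        = Sfun k₁ k₂ r' r • unitVec r r' := by
    filter_upwards [self_mem_nhdsWithin] with r hr
    have hne : r ≠ r' := hr
    have hpos : (0:ℝ) < ‖r - r'‖ := norm_pos_iff.mpr (sub_ne_zero.mpr hne)
    have hρ' : ((‖r - r'‖ : ℝ):ℂ) ≠ 0 := by exact_mod_cast hpos.ne'
    ext i
    have hg2 := hasDerivAt_green k₂ r r' hne i
    have hg1 := hasDerivAt_green k₁ r r' hne i
    have hderiv : pderiv3 i (fun x => green k₂ x r' - green k₁ x r') r
        = Complex.exp (Complex.I*k₂*(‖r-r'‖:ℂ))*(Complex.I*k₂*(‖r-r'‖:ℂ)-1)/(4*(Real.pi:ℂ)*(‖r-r'‖:ℝ)^2)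
            * (((r i - r' i)/‖r - r'‖ : ℝ) : ℂ)
          - Complex.exp (Complex.I*k₁*(‖r-r'‖:ℂ))*(Complex.I*k₁*(‖r-r'‖:ℂ)-1)/(4*(Real.pi:ℂ)*(‖r-r'‖:ℝ)^2)
            * (((r i - r' i)/‖r - r'‖ : ℝ) : ℂ) := (hg2.sub hg1).deriv
    show gradC (fun x => green k₂ x r' - green k₁ x r') r i
        + (((k₂ ^ 2 - k₁ ^ 2) / (8 * (Real.pi : ℂ))) • unitVec r r') i
        = (Sfun k₁ k₂ r' r • unitVec r r') i
    have hgr : gradC (fun x => green k₂ x r' - green k₁ x r') r i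
        = pderiv3 i (fun x => green k₂ x r' - green k₁ x r') r := rfl
    have hsmul : ∀ (a : ℂ), (a • unitVec r r') i = a * unitVec r r' i := fun a => rfl
    rw [hgr, hderiv, hsmul, hsmul]
    have hui : unitVec r r' i = (((r i - r' i)/‖r - r'‖ : ℝ) : ℂ) := by
      simp [unitVec, PiLp.sub_apply]
    have key : ∀ (E₂ E₁ u ρc : ℂ), ρc ≠ 0 →
        E₂*(Complex.I*k₂*ρc-1)/(4*(Real.pi:ℂ)*ρc^2) * u
          - E₁*(Complex.I*k₁*ρc-1)/(4*(Real.pi:ℂ)*ρc^2) * u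
          + (k₂^2-k₁^2)/(8*(Real.pi:ℂ)) * u
        = (((E₂*(Complex.I*k₂*ρc-1)+1)/ρc^2 - (E₁*(Complex.I*k₁*ρc-1)+1)/ρc^2)/(4*(Real.pi:ℂ))
            + (k₂^2-k₁^2)/(8*(Real.pi:ℂ))) * u := by
      intro E₂ E₁ u ρc hρc
      field_simp
      ring
    rw [hui, Sfun]
    push_cast
    exact key _ _ _ _ hρ'
  refine squeeze_zero_norm' (a := fun r => ‖Sfun k₁ k₂ r' r‖) ?_ ?_
  · filter_upwards [hev, self_mem_nhdsWithin] with r heq hr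
    rw [heq, norm_smul, norm_unitVec r r' hr, mul_one]
  · simpa using hStend.norm
end
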